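/- Let ρ₁, ρ₂ be finite positive Borel measures on the circle Λ with ρ₁(Λ) ≤ ρ₂(Λ). Then the collapsed set function is nonnegative: for every half-open arc (a,b] ⊆ Λ one has ρ₁((a,b]) + J(a) − J(b) ≥ 0. -/

import Mathlib

open MeasureTheory Set Filter Topology

noncomputable section

instance fact01 : Fact ((0:ℝ) < 1) := ⟨zero_lt_one⟩

/-- The circle `ℝ/ℤ`. -/
abbrev Circle' : Type := AddCircle (1:ℝ)

/-- The angular position of `w` in the arc starting at `u`, measured positively;
a real number in `[0,1)`. -/
noncomputable def theta (u w : Circle') : ℝ := ((AddCircle.equivIco 1 0) (w - u) : ℝ)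

/-- The closed arc `[u,v]` from `u` to `v` in the positive direction. -/
def arcCC (u v : Circle') : Set Circle' := {w | theta u w ≤ theta u v}

/-- The half-open arc `(u,v]`. -/
def arcOC (u v : Circle') : Set Circle' := {w | 0 < theta u w ∧ theta u w ≤ theta u v}

/-- The half-open arc `[u,v)`. -/
def arcCO (u v : Circle') : Set Circle' := {w | theta u w < theta u v}

/-- The open arc `(u,v)`. -/
def arcOO (u v : Circle') : Set Circle' := {w | 0 < theta u w ∧ theta u w < theta u v}

/-- The excess `E(u,v) = ρ₁([u,v]) - ρ₂([u,v])`. -/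
noncomputable def excess (ρ₁ ρ₂ : Measure Circle') (u v : Circle') : ℝ :=
  (ρ₁ (arcCC u v)).toReal - (ρ₂ (arcCC u v)).toReal

/-- The flux `J(v) = sup_u max (E(u,v)) 0`. -/
noncomputable def flux (ρ₁ ρ₂ : Measure Circle') (v : Circle') : ℝ :=
  ⨆ u : Circle', max (excess ρ₁ ρ₂ u v) 0

/-- The set `𝒥 = {v | ∃ u, E(u,v) > 0}`. -/
def Jset (ρ₁ ρ₂ : Measure Circle') : Set Circle' := {v | ∃ u : Circle', 0 < excess ρ₁ ρ₂ u v}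

lemma theta_mem (u w : Circle') : theta u w ∈ Set.Ico (0:ℝ) 1 := by
  have h := ((AddCircle.equivIco 1 0) (w - u)).2
  simpa [theta] using h

lemma theta_coe (s t : ℝ) : theta (↑s) (↑t) = Int.fract (t - s) := by
  have h : ((↑t : Circle') - ↑s) = ((t - s : ℝ) : Circle') :=
    (QuotientAddGroup.mk_sub _ t s).symm
  rw [theta, h, AddCircle.coe_equivIco_mk_apply]
  simp

lemma theta_fract (u a w : Circle') : theta a w = Int.fract (theta u w - theta u a) := by
  induction u using QuotientAddGroup.induction_on with | H s =>
  induction a using QuotientAddGroup.induction_on with | H p =>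
  induction w using QuotientAddGroup.induction_on with | H t =>
  rw [theta_coe, theta_coe, theta_coe]
  have h : Int.fract (t - s) - Int.fract (p - s)
      = (t - p) - ((⌊t - s⌋ - ⌊p - s⌋ : ℤ) : ℝ) := by
    unfold Int.fract; push_cast; ring
  rw [h, Int.fract_sub_intCast]

lemma measurable_theta (u : Circle') : Measurable (theta u) := by
  have h1 : Measurable fun w : Circle' => w - u := measurable_id.sub_const u
  have h2 : Measurable fun x : Circle' => ((AddCircle.measurableEquivIco (T := 1) 0) x : ℝ) :=
    measurable_subtype_coe.comp (AddCircle.measurableEquivIco (T := 1) 0).measurable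
  exact h2.comp h1

lemma measurableSet_arcCC (u v : Circle') : MeasurableSet (arcCC u v) :=
  measurable_theta u measurableSet_Iic

lemma measurableSet_arcOC (u v : Circle') : MeasurableSet (arcOC u v) := by
  have : arcOC u v = theta u ⁻¹' (Set.Ioc 0 (theta u v)) := rfl
  rw [this]; exact measurable_theta u measurableSet_Ioc

lemma arc_split {u a b : Circle'} (h : theta u a ≤ theta u b) :
    arcCC u b = arcCC u a ∪ arcOC a b ∧ Disjoint (arcCC u a) (arcOC a b) := by
  obtain ⟨hx0, hx1⟩ := theta_mem u a
  obtain ⟨hy0, hy1⟩ := theta_mem u b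
  set x := theta u a with hxd
  set y := theta u b with hyd
  have hab : theta a b = y - x := by
    rw [theta_fract u a b, ← hxd, ← hyd, Int.fract_eq_self.mpr ⟨by linarith, by linarith⟩]
  constructor
  · ext w
    obtain ⟨ht0, ht1⟩ := theta_mem u w
    set t := theta u w with htd
    have haw : theta a w = Int.fract (t - x) := theta_fract u a w
    simp only [arcCC, arcOC, Set.mem_union, Set.mem_setOf_eq, ← htd, ← hxd, ← hyd, haw, hab]
    constructor
    · intro hty
      rcases le_or_gt t x with h1 | h1
      · exact Or.inl h1
      · right
        have hf : Int.fract (t - x) = t - x :=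
          Int.fract_eq_self.mpr ⟨by linarith, by linarith⟩
        rw [hf]; exact ⟨by linarith, by linarith⟩
    · rintro (h1 | ⟨h1, h2⟩)
      · linarith
      · rcases le_or_gt t x with h3 | h3
        · rcases eq_or_lt_of_le h3 with h4 | h4
          · linarith
          · have hf : Int.fract (t - x) = t - x + 1 := by
              rw [show t - x = (t - x + 1) - 1 by linarith, Int.fract_sub_one,
                Int.fract_eq_self.mpr ⟨by linarith, by linarith⟩]; ring
            rw [hf] at h2; linarith
        · have hf : Int.fract (t - x) = t - x :=
            Int.fract_eq_self.mpr ⟨by linarith, by linarith⟩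
          rw [hf] at h2; linarith
  · rw [Set.disjoint_left]
    intro w hw1 hw2
    obtain ⟨ht0, ht1⟩ := theta_mem u w
    set t := theta u w with htd
    have haw : theta a w = Int.fract (t - x) := theta_fract u a w
    simp only [arcCC, arcOC, Set.mem_setOf_eq, ← htd, ← hxd, ← hyd, haw, hab] at hw1 hw2
    rcases eq_or_lt_of_le hw1 with h4 | h4
    · rw [h4] at hw2; simp at hw2
    · have hf : Int.fract (t - x) = t - x + 1 := by
        rw [show t - x = (t - x + 1) - 1 by linarith, Int.fract_sub_one,
          Int.fract_eq_self.mpr ⟨by linarith, by linarith⟩]; ring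
      rw [hf] at hw2; linarith

lemma arc_subset {u a b : Circle'} (h : theta u b < theta u a) :
    arcCC u b ⊆ arcOC a b := by
  obtain ⟨hx0, hx1⟩ := theta_mem u a
  obtain ⟨hy0, hy1⟩ := theta_mem u b
  set x := theta u a with hxd
  set y := theta u b with hyd
  have hab : theta a b = y - x + 1 := by
    rw [theta_fract u a b, ← hxd, ← hyd,
      show y - x = (y - x + 1) - 1 by linarith, Int.fract_sub_one,
      Int.fract_eq_self.mpr ⟨by linarith, by linarith⟩]; ring
  intro w hw
  obtain ⟨ht0, ht1⟩ := theta_mem u w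
  set t := theta u w with htd
  have haw : theta a w = Int.fract (t - x) := theta_fract u a w
  simp only [arcCC, Set.mem_setOf_eq, ← htd, ← hyd] at hw
  have hf : Int.fract (t - x) = t - x + 1 := by
    rw [show t - x = (t - x + 1) - 1 by linarith, Int.fract_sub_one,
      Int.fract_eq_self.mpr ⟨by linarith, by linarith⟩]; ring
  simp only [arcOC, Set.mem_setOf_eq, haw, hab, hf]
  exact ⟨by linarith, by linarith⟩

lemma flux_bdd (ρ₁ ρ₂ : Measure Circle') [IsFiniteMeasure ρ₁] (v : Circle') :
    BddAbove (Set.range fun u => max (excess ρ₁ ρ₂ u v) 0) := by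
  refine ⟨(ρ₁ Set.univ).toReal, ?_⟩
  rintro _ ⟨u, rfl⟩
  have h1 : excess ρ₁ ρ₂ u v ≤ (ρ₁ Set.univ).toReal := by
    have := ENNReal.toReal_mono (measure_ne_top ρ₁ _) (measure_mono (Set.subset_univ (arcCC u v)))
    have h2 : 0 ≤ (ρ₂ (arcCC u v)).toReal := ENNReal.toReal_nonneg
    unfold excess; linarith
  exact max_le h1 ENNReal.toReal_nonneg

lemma flux_nonneg (ρ₁ ρ₂ : Measure Circle') [IsFiniteMeasure ρ₁] (v : Circle') :
    0 ≤ flux ρ₁ ρ₂ v :=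
  le_trans (le_max_right _ 0) (le_ciSup (flux_bdd ρ₁ ρ₂ v) v)

/-- the collapsed set function is nonnegative: for every half-open arc
`(a,b]` one has `ρ₁((a,b]) + J(a) - J(b) ≥ 0`. -/
theorem stmt5 (ρ₁ ρ₂ : Measure Circle') [IsFiniteMeasure ρ₁] [IsFiniteMeasure ρ₂]
    (hmass : ρ₁ Set.univ ≤ ρ₂ Set.univ) :
    ∀ a b : Circle', 0 ≤ (ρ₁ (arcOC a b)).toReal + flux ρ₁ ρ₂ a - flux ρ₁ ρ₂ b := by
  intro a b
  rw [sub_nonneg]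
  refine ciSup_le fun u => ?_
  have hfa : max (excess ρ₁ ρ₂ u a) 0 ≤ flux ρ₁ ρ₂ a := le_ciSup (flux_bdd ρ₁ ρ₂ a) u
  refine max_le ?_ (add_nonneg ENNReal.toReal_nonneg (flux_nonneg ρ₁ ρ₂ a))
  rcases le_or_gt (theta u a) (theta u b) with h | h
  · obtain ⟨heq, hdisj⟩ := arc_split h
    have key : ∀ ρ : Measure Circle', IsFiniteMeasure ρ →
        (ρ (arcCC u b)).toReal = (ρ (arcCC u a)).toReal + (ρ (arcOC a b)).toReal := by
      intro ρ hρ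
      rw [heq, measure_union hdisj (measurableSet_arcOC a b),
        ENNReal.toReal_add (measure_ne_top _ _) (measure_ne_top _ _)]
    have h1 := key ρ₁ inferInstance
    have h2 := key ρ₂ inferInstance
    have h3 : 0 ≤ (ρ₂ (arcOC a b)).toReal := ENNReal.toReal_nonneg
    have h4 : excess ρ₁ ρ₂ u a ≤ max (excess ρ₁ ρ₂ u a) 0 := le_max_left _ _
    unfold excess at *
    linarith
  · have hsub := arc_subset h
    have h1 : (ρ₁ (arcCC u b)).toReal ≤ (ρ₁ (arcOC a b)).toReal :=
      ENNReal.toReal_mono (measure_ne_top _ _) (measure_mono hsub)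
    have h2 : 0 ≤ (ρ₂ (arcCC u b)).toReal := ENNReal.toReal_nonneg
    have h5 : 0 ≤ flux ρ₁ ρ₂ a := flux_nonneg ρ₁ ρ₂ a
    unfold excess
    linarith

end
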